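/- If M is a positive semidefinite n×n real matrix with all diagonal entries equal to 1, then M∘M - (1/n)·E_n is positive semidefinite, where E_n is the n×n all-ones matrix. -/

import Mathlib

theorem hadamard_square_all_ones_bound {n : ℕ} (M : Matrix (Fin n) (Fin n) ℝ)
    (hM : M.PosSemidef) (hdiag : ∀ i, M i i = 1) :
    (Matrix.hadamard M M -
      (n : ℝ)⁻¹ • Matrix.of (fun _ _ => (1 : ℝ))).PosSemidef := by
  obtain ⟨B, hB⟩ : ∃ B : Matrix (Fin n) (Fin n) ℝ, M = B.conjTranspose * B := by
    open MatrixOrder in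
    obtain ⟨X, hX, -, hXX⟩ :=
      sub_zero M ▸ CFC.exists_sqrt_of_isSelfAdjoint_of_quasispectrumRestricts hM.isHermitian
        (QuasispectrumRestricts.nnreal_of_nonneg hM.nonneg)
    exact ⟨X, by rw [show X.conjTranspose = X from hX.star_eq, hXX, sub_zero]⟩
  have key : ∀ i j, M i j = ∑ k, B k i * B k j := by
    intro i j
    rw [hB]
    simp [Matrix.mul_apply, Matrix.conjTranspose_apply]
  rw [Matrix.posSemidef_iff_dotProduct_mulVec]
  constructor
  · show _ = _
    ext i j
    simp only [Matrix.conjTranspose_apply, Matrix.sub_apply, Matrix.smul_apply,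
      Matrix.hadamard_apply, Matrix.of_apply, star_trivial, smul_eq_mul, mul_one]
    rw [key i j, key j i]
    congr 1
    congr 1 <;> exact Finset.sum_congr rfl fun k _ => mul_comm _ _
  · intro x
    set A : Fin n → Fin n → ℝ := fun k l => ∑ i, x i * B k i * B l i with hA
    have claim1 : (∑ i, x i) = ∑ k, A k k := by
      rw [Finset.sum_comm]
      refine Finset.sum_congr rfl fun i _ => ?_
      have := key i i
      rw [hdiag i] at this
      calc x i = x i * ∑ k, B k i * B k i := by rw [← this]; ring
        _ = ∑ k, x i * B k i * B k i := by rw [Finset.mul_sum]; exact Finset.sum_congr rfl fun k _ => by ring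
    have claim2 : (∑ i, ∑ j, x i * x j * (M i j)^2) = ∑ k, ∑ l, (A k l)^2 := by
      have inner : ∀ i j : Fin n, x i * x j * (M i j)^2
          = ∑ k, ∑ l, (x i * B k i * B l i) * (x j * B k j * B l j) := by
        intro i j
        rw [key i j, sq, Finset.sum_mul_sum, Finset.mul_sum]
        refine Finset.sum_congr rfl fun k _ => ?_
        rw [Finset.mul_sum]
        exact Finset.sum_congr rfl fun l _ => by ring
      have expand : ∀ k l : Fin n, (A k l)^2
          = ∑ i, ∑ j, (x i * B k i * B l i) * (x j * B k j * B l j) := by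
        intro k l
        rw [hA, sq, Finset.sum_mul_sum]
      calc (∑ i, ∑ j, x i * x j * (M i j)^2)
          = ∑ i, ∑ j, ∑ k, ∑ l, (x i * B k i * B l i) * (x j * B k j * B l j) :=
            Finset.sum_congr rfl fun i _ => Finset.sum_congr rfl fun j _ => inner i j
        _ = ∑ i, ∑ k, ∑ j, ∑ l, (x i * B k i * B l i) * (x j * B k j * B l j) :=
            Finset.sum_congr rfl fun i _ => Finset.sum_comm
        _ = ∑ k, ∑ i, ∑ j, ∑ l, (x i * B k i * B l i) * (x j * B k j * B l j) :=
            Finset.sum_comm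
        _ = ∑ k, ∑ i, ∑ l, ∑ j, (x i * B k i * B l i) * (x j * B k j * B l j) :=
            Finset.sum_congr rfl fun k _ => Finset.sum_congr rfl fun i _ => Finset.sum_comm
        _ = ∑ k, ∑ l, ∑ i, ∑ j, (x i * B k i * B l i) * (x j * B k j * B l j) :=
            Finset.sum_congr rfl fun k _ => Finset.sum_comm
        _ = ∑ k, ∑ l, (A k l)^2 :=
            Finset.sum_congr rfl fun k _ => Finset.sum_congr rfl fun l _ => (expand k l).symm
    have cs : (∑ k, A k k)^2 ≤ (n : ℝ) * ∑ k, (A k k)^2 := by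
      have := sq_sum_le_card_mul_sum_sq (s := Finset.univ) (f := fun k => A k k)
      simpa using this
    have diag_le : (∑ k, (A k k)^2) ≤ ∑ k, ∑ l, (A k l)^2 := by
      refine Finset.sum_le_sum fun k _ => ?_
      exact Finset.single_le_sum (fun l _ => sq_nonneg (A k l)) (Finset.mem_univ k)
    have Tnonneg : (0:ℝ) ≤ ∑ k, ∑ l, (A k l)^2 :=
      Finset.sum_nonneg fun k _ => Finset.sum_nonneg fun l _ => sq_nonneg _
    have main : (n : ℝ)⁻¹ * (∑ i, x i)^2 ≤ ∑ i, ∑ j, x i * x j * (M i j)^2 := by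
      rw [claim1, claim2]
      rcases Nat.eq_zero_or_pos n with h0 | hpos
      · subst h0
        simp
      · have hn : (0:ℝ) < n := by exact_mod_cast hpos
        rw [inv_mul_le_iff₀ hn, mul_comm]
        exact cs.trans (by nlinarith [diag_le])
    have expandQ : dotProduct (star x) (Matrix.mulVec (Matrix.hadamard M M - (n : ℝ)⁻¹ • Matrix.of (fun _ _ => (1 : ℝ))) x)
        = (∑ i, ∑ j, x i * x j * (M i j)^2) - (n:ℝ)⁻¹ * (∑ i, x i)^2 := by
      simp only [dotProduct, Matrix.mulVec, Matrix.sub_apply, Matrix.smul_apply,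
        Matrix.hadamard_apply, Matrix.of_apply, star_trivial, smul_eq_mul, mul_one, mul_sub,
        Finset.sum_sub_distrib, Finset.mul_sum, sq, Finset.sum_mul]
      rw [← Finset.sum_sub_distrib]
      refine Finset.sum_congr rfl fun i _ => ?_
      rw [← Finset.sum_sub_distrib]
      exact Finset.sum_congr rfl fun j _ => by ring
    rw [expandQ]
    linarith
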